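/- For any states s, s', the asymmetry of the one-step value deviation is bounded: |ρ_r^π(s,s') − ρ_r^π(s',s)| ≤ |r(s) − r(s')| + ((1+γ)/2)‖P^π(·|s) − P^π(·|s')‖₁ · sp(V_r^π). -/
import Mathlib


/-- Asymmetry of the one-step value deviation:
`|ρ(s,s') − ρ(s',s)| ≤ |r s − r s'| + ((1+γ)/2)‖P(·|s) − P(·|s')‖₁ · sp(V)`. -/
theorem one_step_deviation_asymmetry
    {S : Type*} [Fintype S] [Nonempty S]
    (P : S → S → ℝ) (r : S → ℝ) (V : S → ℝ) (γ : ℝ)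
    (hγ : γ ∈ Set.Ioo (0:ℝ) 1)
    (hPnn : ∀ s s', 0 ≤ P s s') (hPsum : ∀ s, ∑ s', P s s' = 1)
    (hr : ∀ s, r s ∈ Set.Icc (0:ℝ) 1)
    (hBell : ∀ s, V s = r s + γ * ∑ s', P s s' * V s') :
    ∀ s s' : S,
      |(V s' - ∑ z, P s z * V z) - (V s - ∑ z, P s' z * V z)| ≤
        |r s - r s'| +
          ((1 + γ) / 2) * (∑ z, |P s z - P s' z|) * ((⨆ t, V t) - (⨅ t, V t)) := by
  intro s s'
  set M := ⨆ t, V t with hMdef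
  set m := ⨅ t, V t with hmdef
  have hM : ∀ z, V z ≤ M := fun z =>
    le_ciSup (Set.Finite.bddAbove (Set.finite_range V)) z
  have hm : ∀ z, m ≤ V z := fun z =>
    ciInf_le (Set.Finite.bddBelow (Set.finite_range V)) z
  set c := (M + m) / 2 with hcdef
  set A := ∑ z, P s z * V z with hA
  set B := ∑ z, P s' z * V z with hB
  have hdev : ∀ z, |V z - c| ≤ (M - m) / 2 := by
    intro z
    rw [abs_le]
    constructor
    · have := hm z; simp only [hcdef]; linarith
    · have := hM z; simp only [hcdef]; linarith
  have hsum0 : ∑ z, (P s z - P s' z) = 0 := by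
    rw [Finset.sum_sub_distrib, hPsum s, hPsum s']; ring
  have hrepr : A - B = ∑ z, (P s z - P s' z) * (V z - c) := by
    have : ∑ z, (P s z - P s' z) * (V z - c)
        = ∑ z, ((P s z * V z - P s' z * V z) - (P s z - P s' z) * c) := by
      apply Finset.sum_congr rfl; intro z _; ring
    rw [this, Finset.sum_sub_distrib, Finset.sum_sub_distrib, ← Finset.sum_mul, hsum0]
    simp [hA, hB]
  have key : |A - B| ≤ (1/2) * (∑ z, |P s z - P s' z|) * (M - m) := by
    rw [hrepr]
    calc |∑ z, (P s z - P s' z) * (V z - c)|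
        ≤ ∑ z, |(P s z - P s' z) * (V z - c)| := Finset.abs_sum_le_sum_abs _ _
      _ ≤ ∑ z, |P s z - P s' z| * ((M - m) / 2) := by
          apply Finset.sum_le_sum
          intro z _
          rw [abs_mul]
          exact mul_le_mul_of_nonneg_left (hdev z) (abs_nonneg _)
      _ = (1/2) * (∑ z, |P s z - P s' z|) * (M - m) := by
          rw [← Finset.sum_mul]; ring
  have hBs := hBell s
  have hBs' := hBell s'
  have hx : (V s' - A) - (V s - B) = (r s' - r s) + (1 + γ) * (B - A) := by
    rw [hBs, hBs', ← hA, ← hB]; ring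
  rw [hx]
  have h1 : |(r s' - r s) + (1 + γ) * (B - A)| ≤ |r s' - r s| + (1 + γ) * |B - A| := by
    calc |(r s' - r s) + (1 + γ) * (B - A)| ≤ |r s' - r s| + |(1 + γ) * (B - A)| :=
          abs_add_le _ _
      _ = |r s' - r s| + (1 + γ) * |B - A| := by
          rw [abs_mul, abs_of_nonneg (by linarith [hγ.1] : (0:ℝ) ≤ 1 + γ)]
  have h2 : |B - A| = |A - B| := abs_sub_comm _ _
  have h3 : |r s' - r s| = |r s - r s'| := abs_sub_comm _ _
  have h4 : (1 + γ) * |A - B| ≤ (1 + γ) * ((1/2) * (∑ z, |P s z - P s' z|) * (M - m)) :=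
    mul_le_mul_of_nonneg_left key (by linarith [hγ.1])
  calc |(r s' - r s) + (1 + γ) * (B - A)|
      ≤ |r s' - r s| + (1 + γ) * |B - A| := h1
    _ = |r s - r s'| + (1 + γ) * |A - B| := by rw [h2, h3]
    _ ≤ |r s - r s'| + (1 + γ) * ((1/2) * (∑ z, |P s z - P s' z|) * (M - m)) := by linarith
    _ = |r s - r s'| + ((1 + γ) / 2) * (∑ z, |P s z - P s' z|) * (M - m) := by ring
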